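/- A poset P of length at most 2 has a least (under inclusion) nonempty D-closed subset if and only if either P has exactly one element or P is isomorphic to P_{I,J} for some nonempty disjoint sets I and J. -/

import Mathlib

/-! Common definitions: lattices of order-convex subsets of a poset,
length of a poset, the identities (S), (U), (B), (L2), (H_n), (H_{m,n}),
join-irreducibility, the join-dependency relation, join-seeds,
the posets P_{I,J}, tree-like posets, D-closed sets,
and complete lattice congruences. -/

open Set

/-- The lattice `Co P` of all order-convex subsets of a poset `P`. -/
def Co (P : Type*) [PartialOrder P] : Type _ := {s : Set P // s.OrdConnected}

namespace Co

variable {P : Type*} [PartialOrder P]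

instance : PartialOrder (Co P) := Subtype.partialOrder _

instance : InfSet (Co P) :=
  ⟨fun S => ⟨⋂ s ∈ S, s.1, Set.ordConnected_biInter fun s _ => s.2⟩⟩

noncomputable instance : CompleteLattice (Co P) :=
  completeLatticeOfInf (Co P) (by
    intro S
    constructor
    · intro t ht
      exact Set.biInter_subset_of_mem (t := fun s => s.1) ht
    · intro b hb
      exact Set.subset_iInter₂ fun t ht => hb ht)

/-- The order-convex subset of `P` with underlying set `X`. -/
def mk' (X : Set P) (hX : X.OrdConnected) : Co P := ⟨X, hX⟩

/-- The singleton `{p}`, as an order-convex set. -/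
def sngl (p : P) : Co P := ⟨{p}, Set.ordConnected_singleton⟩

/-- The empty order-convex set. -/
def emp : Co P := ⟨∅, Set.ordConnected_empty⟩

end Co

/-- `lengthLE P n` states that the poset `P` has length at most `n`, that is,
every finite chain of `P` has at most `n + 1` elements. -/
def lengthLE (P : Type*) [PartialOrder P] (n : ℕ) : Prop :=
  ∀ C : Finset P, IsChain (· ≤ ·) (C : Set P) → C.card ≤ n + 1

section Identities

/-- The Stirlitz identity (S). -/
def IdS (L : Type*) [Lattice L] : Prop :=
  ∀ a b b₀ b₁ c : L,
    a ⊓ ((b ⊓ (b₀ ⊔ b₁)) ⊔ c) =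
      (a ⊓ (b ⊓ (b₀ ⊔ b₁)))
      ⊔ (a ⊓ (b₀ ⊔ c) ⊓ ((b ⊓ (b₀ ⊔ b₁) ⊓ (a ⊔ b₀)) ⊔ c))
      ⊔ (a ⊓ (b₁ ⊔ c) ⊓ ((b ⊓ (b₀ ⊔ b₁) ⊓ (a ⊔ b₁)) ⊔ c))

/-- The Udav identity (U). -/
def IdU (L : Type*) [Lattice L] : Prop :=
  ∀ x x₀ x₁ x₂ : L,
    x ⊓ (x₀ ⊔ x₁) ⊓ (x₁ ⊔ x₂) ⊓ (x₀ ⊔ x₂) =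
      (x ⊓ x₀ ⊓ (x₁ ⊔ x₂)) ⊔ (x ⊓ x₁ ⊓ (x₀ ⊔ x₂)) ⊔ (x ⊓ x₂ ⊓ (x₀ ⊔ x₁))

/-- The Bond identity (B). -/
def IdB (L : Type*) [Lattice L] : Prop :=
  ∀ x a₀ a₁ b₀ b₁ : L,
    x ⊓ (a₀ ⊔ a₁) ⊓ (b₀ ⊔ b₁) =
      (x ⊓ a₀ ⊓ (b₀ ⊔ b₁)) ⊔ (x ⊓ a₁ ⊓ (b₀ ⊔ b₁))
      ⊔ (x ⊓ b₀ ⊓ (a₀ ⊔ a₁)) ⊔ (x ⊓ b₁ ⊓ (a₀ ⊔ a₁))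
      ⊔ (x ⊓ (a₀ ⊔ a₁) ⊓ (b₀ ⊔ b₁) ⊓ (a₀ ⊔ b₀) ⊓ (a₁ ⊔ b₁))
      ⊔ (x ⊓ (a₀ ⊔ a₁) ⊓ (b₀ ⊔ b₁) ⊓ (a₀ ⊔ b₁) ⊓ (a₁ ⊔ b₀))

/-- The identity (L₂). -/
def IdL2 (L : Type*) [Lattice L] : Prop :=
  ∀ a b b' c c' : L,
    a ⊓ ((b ⊓ (c ⊔ c')) ⊔ b') =
      (a ⊓ b ⊓ (c ⊔ c')) ⊔ (a ⊓ ((b ⊓ c) ⊔ b')) ⊔ (a ⊓ ((b ⊓ c') ⊔ b'))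

variable {L : Type*} [Lattice L]

/-- The lattice polynomial `U_{i,n}` (in the variables `x₀, …, xₙ, x'₁, …, x'ₙ`). -/
def Upoly (x x' : ℕ → L) (n : ℕ) (i : ℕ) : L :=
  if h : n ≤ i then x n
  else x i ⊓ (Upoly x x' n (i + 1) ⊔ x' (i + 1))
  termination_by n - i
  decreasing_by omega

/-- The lattice polynomial `V_{i,j,n}`. -/
def Vpoly (x x' : ℕ → L) (n i : ℕ) (j : ℕ) : L :=
  if h : i ≤ j then (x i ⊓ Upoly x x' n (i + 1)) ⊔ (x i ⊓ x' (i + 1))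
  else x j ⊓ (Vpoly x x' n i (j + 1) ⊔ x' (j + 1))
  termination_by i - j
  decreasing_by omega

/-- The lattice polynomial `W_{i,j,n}`. -/
def Wpoly (x x' : ℕ → L) (n i : ℕ) (j : ℕ) : L :=
  if h : i ≤ j then
    x i ⊓ (x' (i + 1) ⊔ x' (i + 2)) ⊓ ((Upoly x x' n (i + 1) ⊓ (x i ⊔ x' (i + 2))) ⊔ x' (i + 1))
  else x j ⊓ (Wpoly x x' n i (j + 1) ⊔ x' (j + 1))
  termination_by i - j
  decreasing_by omega

/-- `bigJoin f k = f 0 ⊔ f 1 ⊔ ⋯ ⊔ f k`. -/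
def bigJoin (f : ℕ → L) : ℕ → L
  | 0 => f 0
  | k + 1 => bigJoin f k ⊔ f (k + 1)

end Identities

/-- The identity (Hₙ) : `Uₙ = ⋁_{0 ≤ i ≤ n-1} V_{i,n} ∨ ⋁_{0 ≤ i ≤ n-2} W_{i,n}`
(intended for `n ≥ 1`). -/
def IdH (n : ℕ) (L : Type*) [Lattice L] : Prop :=
  ∀ x x' : ℕ → L,
    Upoly x x' n 0 =
      bigJoin (fun i =>
        if i + 2 ≤ n then Vpoly x x' n i 0 ⊔ Wpoly x x' n i 0 else Vpoly x x' n i 0) (n - 1)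

/-- The identity (H_{m,n}) (intended for `m, n ≥ 1`); the common base point is
`x 0 = y 0 = t`. -/
def IdHmn (m n : ℕ) (L : Type*) [Lattice L] : Prop :=
  ∀ x x' y y' : ℕ → L, x 0 = y 0 →
    Upoly x x' m 0 ⊓ Upoly y y' n 0 =
      bigJoin (fun i =>
          if i + 2 ≤ m then
            (Vpoly x x' m i 0 ⊓ Upoly y y' n 0) ⊔ (Wpoly x x' m i 0 ⊓ Upoly y y' n 0)
          else Vpoly x x' m i 0 ⊓ Upoly y y' n 0) (m - 1)
      ⊔ bigJoin (fun j =>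
          if j + 2 ≤ n then
            (Upoly x x' m 0 ⊓ Vpoly y y' n j 0) ⊔ (Upoly x x' m 0 ⊓ Wpoly y y' n j 0)
          else Upoly x x' m 0 ⊓ Vpoly y y' n j 0) (n - 1)
      ⊔ (Upoly x x' m 0 ⊓ Upoly y y' n 0 ⊓ (x 1 ⊔ y' 1) ⊓ (x' 1 ⊔ y 1))

/-- `p` is join-irreducible: `p = x ⊔ y` implies `p = x` or `p = y`. -/
def JIrr {L : Type*} [Lattice L] (p : L) : Prop :=
  ∀ x y : L, p = x ⊔ y → p = x ∨ p = y

/-- The join-dependency relation `p D q`. -/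
def DRel {L : Type*} [Lattice L] (p q : L) : Prop :=
  p ≠ q ∧ ∃ x : L, p ≤ q ⊔ x ∧ ∀ y < q, ¬ p ≤ y ⊔ x

/-- A subset `S` of a lattice `L` is a join-seed. -/
def JoinSeed (L : Type*) [Lattice L] (S : Set L) : Prop :=
  (∀ p ∈ S, JIrr p) ∧
  (∀ a : L, ∃ T ⊆ S, IsLUB T a) ∧
  (∀ p ∈ S, ∀ a b : L, p ≤ a ⊔ b → ¬ p ≤ a → ¬ p ≤ b →
    ∃ x ∈ S, ∃ y ∈ S, x ≤ a ∧ y ≤ b ∧ p ≤ x ⊔ y ∧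
      (∀ x' < x, ¬ p ≤ x' ⊔ y) ∧ (∀ y' < y, ¬ p ≤ x ⊔ y'))

/-- The poset `P_{I,J} = I ∪ {p} ∪ J`, where every element of `I` is below `p`,
`p` is below every element of `J`, every element of `I` is below every element
of `J`, and there are no other strict comparabilities. -/
def PIJ (I J : Type*) : Type _ := I ⊕ (Unit ⊕ J)

namespace PIJ

variable {I J : Type*}

/-- The rank (height) of an element of `P_{I,J}`. -/
def rank (a : PIJ I J) : ℕ :=
  Sum.elim (fun _ => 0) (Sum.elim (fun _ => 1) fun _ => 2) a

instance : PartialOrder (PIJ I J) where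
  le a b := a = b ∨ rank a < rank b
  le_refl a := Or.inl rfl
  le_trans a b c hab hbc := by
    rcases hab with rfl | h
    · exact hbc
    · rcases hbc with rfl | h'
      · exact Or.inr h
      · exact Or.inr (h.trans h')
  le_antisymm a b hab hba := by
    rcases hab with rfl | h
    · rfl
    · rcases hba with rfl | h'
      · rfl
      · omega

end PIJ

/-- A poset is tree-like if it has no infinite bounded chain and between any two
points there is at most one repetition-free finite path with respect to the
covering relation. -/
def TreeLike (P : Type*) [PartialOrder P] : Prop :=
  (∀ C : Set P, IsChain (· ≤ ·) C → BddAbove C → BddBelow C → C.Finite) ∧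
  (∀ a b : P, ∀ l₁ l₂ : List P,
    l₁.Nodup → l₁.head? = some a → l₁.getLast? = some b →
      l₁.Chain' (fun u v => u ⋖ v ∨ v ⋖ u) →
    l₂.Nodup → l₂.head? = some a → l₂.getLast? = some b →
      l₂.Chain' (fun u v => u ⋖ v ∨ v ⋖ u) →
    l₁ = l₂)

/-- A subset `U` of a poset `P` is `D`-closed. -/
def DClosed {P : Type*} [PartialOrder P] (U : Set P) : Prop :=
  ∀ x p y : P, x < p → p < y → (x ∈ U ∨ y ∈ U) → p ∈ U

/-- A complete congruence of a complete lattice. -/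
structure IsCompleteCongr {L : Type*} [CompleteLattice L] (θ : L → L → Prop) : Prop where
  refl : ∀ x, θ x x
  symm : ∀ {x y}, θ x y → θ y x
  trans : ∀ {x y z}, θ x y → θ y z → θ x z
  sup : ∀ {a b c d}, θ a b → θ c d → θ (a ⊔ c) (b ⊔ d)
  inf : ∀ {a b c d}, θ a b → θ c d → θ (a ⊓ c) (b ⊓ d)
  cSup : ∀ (x : L) (Y : Set L), Y.Nonempty → (∀ y ∈ Y, θ x y) → θ x (sSup Y)
  cInf : ∀ (x : L) (Y : Set L), Y.Nonempty → (∀ y ∈ Y, θ x y) → θ x (sInf Y)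

/-- The map `h_U : Co(P) → Co(P ∖ U)`, `X ↦ X ∖ U`. -/
def coRestrict {P : Type*} [PartialOrder P] (U : Set P) (X : Co P) :
    Co {p : P // p ∉ U} :=
  ⟨Subtype.val ⁻¹' X.1, by
    constructor
    rintro a ha b hb z hz
    exact X.2.out ha hb ⟨hz.1, hz.2⟩⟩

/-- The lattice `D(P)` of all `D`-closed subsets of a poset `P`. -/
def DSub (P : Type*) [PartialOrder P] : Type _ := {U : Set P // DClosed U}

namespace DSub

variable {P : Type*} [PartialOrder P]

instance : PartialOrder (DSub P) := Subtype.partialOrder _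

instance : InfSet (DSub P) :=
  ⟨fun S => ⟨⋂ U ∈ S, U.1, by
    intro x p y h1 h2 h3
    simp only [Set.mem_iInter] at h3 ⊢
    intro U hU
    exact U.2 x p y h1 h2 (h3.imp (fun h => h U hU) fun h => h U hU)⟩⟩

noncomputable instance : CompleteLattice (DSub P) :=
  completeLatticeOfInf (DSub P) (by
    intro S
    constructor
    · intro t ht
      exact Set.biInter_subset_of_mem (t := fun U => U.1) ht
    · intro b hb
      exact Set.subset_iInter₂ fun t ht => hb ht)

end DSub


section Aux

lemma pij_le_iff {I J : Type*} (a b : PIJ I J) :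
    a ≤ b ↔ a = b ∨ PIJ.rank a < PIJ.rank b := Iff.rfl

lemma pij_lt_iff {I J : Type*} (a b : PIJ I J) :
    a < b ↔ PIJ.rank a < PIJ.rank b := by
  constructor
  · intro h
    rcases (pij_le_iff a b).1 h.le with rfl | hr
    · exact absurd rfl h.ne
    · exact hr
  · intro hr
    refine lt_of_le_of_ne ((pij_le_iff a b).2 (Or.inr hr)) ?_
    rintro rfl; omega

lemma pij_rank_le_two {I J : Type*} (a : PIJ I J) : PIJ.rank a ≤ 2 := by
  rcases a with i | u | j <;> simp [PIJ.rank]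

lemma pij_rank_eq_one {I J : Type*} (a : PIJ I J) (h : PIJ.rank a = 1) :
    a = Sum.inr (Sum.inl ()) := by
  rcases a with i | u | j
  · simp [PIJ.rank] at h
  · rfl
  · simp [PIJ.rank] at h

variable {P : Type*} [PartialOrder P]

lemma no4 (hP : lengthLE P 2) {a b c d : P} (h1 : a < b) (h2 : b < c) (h3 : c < d) :
    False := by
  classical
  have hab := h1.le
  have hbc := h2.le
  have hcd := h3.le
  have hac := (h1.trans h2).le
  have hbd := (h2.trans h3).le
  have had := (h1.trans (h2.trans h3)).le
  have haa : a ≤ a := le_rfl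
  have hbb : b ≤ b := le_rfl
  have hcc : c ≤ c := le_rfl
  have hdd : d ≤ d := le_rfl
  have hchain : IsChain (· ≤ ·) (({a, b, c, d} : Finset P) : Set P) := by
    intro x hx y hy _
    simp only [Finset.coe_insert, Set.mem_insert_iff, Finset.coe_singleton,
      Set.mem_singleton_iff] at hx hy
    rcases hx with rfl | rfl | rfl | rfl <;> rcases hy with rfl | rfl | rfl | rfl <;> tauto
  have hcard : ({a, b, c, d} : Finset P).card = 4 := by
    have n1 : a ∉ ({b, c, d} : Finset P) := by
      simp [h1.ne, (h1.trans h2).ne, (h1.trans (h2.trans h3)).ne]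
    have n2 : b ∉ ({c, d} : Finset P) := by
      simp [h2.ne, (h2.trans h3).ne]
    have n3 : c ∉ ({d} : Finset P) := by simp [h3.ne]
    rw [Finset.card_insert_of_notMem n1, Finset.card_insert_of_notMem n2,
      Finset.card_insert_of_notMem n3, Finset.card_singleton]
  have := hP {a, b, c, d} hchain
  omega

lemma mid_dclosed (hP : lengthLE P 2) {x p y : P} (hxp : x < p) (hpy : p < y) :
    DClosed ({p} : Set P) := by
  intro a q b haq hqb hmem
  rcases hmem with h | h
  · rw [Set.mem_singleton_iff] at h; subst h
    exact absurd (no4 hP hxp haq hqb) (by simp)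
  · rw [Set.mem_singleton_iff] at h; subst h
    exact absurd (no4 hP haq hqb hpy) (by simp)

lemma sing_dclosed {a : P} (h1 : ¬∃ q r : P, a < q ∧ q < r)
    (h2 : ¬∃ r q : P, r < q ∧ q < a) : DClosed ({a} : Set P) := by
  intro x q y hxq hqy hmem
  rcases hmem with h | h
  · rw [Set.mem_singleton_iff] at h; subst h
    exact absurd ⟨q, y, hxq, hqy⟩ h1
  · rw [Set.mem_singleton_iff] at h; subst h
    exact absurd ⟨x, q, hxq, hqy⟩ h2


section PIJLemmas

variable {I J : Type*}

lemma pij_inl_le_inl (i i' : I) :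
    @LE.le (PIJ I J) _ (Sum.inl i) (Sum.inl i') ↔ i = i' := by
  erw [pij_le_iff]; simp only [PIJ.rank, Sum.elim_inl, lt_irrefl, or_false]
  exact ⟨fun h => Sum.inl_injective h, fun h => by rw [h]⟩

lemma pij_inl_le_mid (i : I) (u : Unit) :
    @LE.le (PIJ I J) _ (Sum.inl i) (Sum.inr (Sum.inl u)) :=
  (pij_le_iff _ _).2 (Or.inr (by simp [PIJ.rank]))

lemma pij_inl_le_inr (i : I) (j : J) :
    @LE.le (PIJ I J) _ (Sum.inl i) (Sum.inr (Sum.inr j)) :=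
  (pij_le_iff _ _).2 (Or.inr (by simp [PIJ.rank]))

lemma pij_mid_not_le_inl (u : Unit) (i : I) :
    ¬ @LE.le (PIJ I J) _ (Sum.inr (Sum.inl u)) (Sum.inl i) := by
  erw [pij_le_iff]; simp [PIJ.rank]

lemma pij_mid_le_mid (u u' : Unit) :
    @LE.le (PIJ I J) _ (Sum.inr (Sum.inl u)) (Sum.inr (Sum.inl u')) :=
  (pij_le_iff _ _).2 (Or.inl (by cases u; cases u'; rfl))

lemma pij_mid_le_inr (u : Unit) (j : J) :
    @LE.le (PIJ I J) _ (Sum.inr (Sum.inl u)) (Sum.inr (Sum.inr j)) :=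
  (pij_le_iff _ _).2 (Or.inr (by simp [PIJ.rank]))

lemma pij_inr_not_le_inl (j : J) (i : I) :
    ¬ @LE.le (PIJ I J) _ (Sum.inr (Sum.inr j)) (Sum.inl i) := by
  erw [pij_le_iff]; simp [PIJ.rank]

lemma pij_inr_not_le_mid (j : J) (u : Unit) :
    ¬ @LE.le (PIJ I J) _ (Sum.inr (Sum.inr j)) (Sum.inr (Sum.inl u)) := by
  erw [pij_le_iff]; simp only [PIJ.rank, Sum.elim_inr, Sum.elim_inl]
  rintro (h | h)
  · exact absurd (Sum.inr_injective h) (by simp)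
  · omega

lemma pij_inr_le_inr (j j' : J) :
    @LE.le (PIJ I J) _ (Sum.inr (Sum.inr j)) (Sum.inr (Sum.inr j')) ↔ j = j' := by
  erw [pij_le_iff]; simp only [PIJ.rank, Sum.elim_inr, lt_irrefl, or_false]
  exact ⟨fun h => Sum.inr_injective (Sum.inr_injective h), fun h => by rw [h]⟩

end PIJLemmas

end Aux

theorem stmt17.{u} (P : Type u) [PartialOrder P] (hP : lengthLE P 2) :
    (∃ U : Set P, DClosed U ∧ U.Nonempty ∧
      ∀ V : Set P, DClosed V → V.Nonempty → U ⊆ V) ↔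
    ((∃ a : P, ∀ b : P, b = a) ∨
      ∃ (I J : Type u), Nonempty I ∧ Nonempty J ∧ Nonempty (P ≃o PIJ I J)) := by
  classical
  constructor
  · rintro ⟨U, hU, hUne, hleast⟩
    by_cases hone : ∃ a : P, ∀ b : P, b = a
    · exact Or.inl hone
    right
    -- there is a 3-chain
    have hchain3 : ∃ x p y : P, x < p ∧ p < y := by
      by_contra hno
      obtain ⟨u, hu⟩ := hUne
      have hall : ∀ a : P, u = a := by
        intro a
        have hDa : DClosed ({a} : Set P) := by
          intro x q y hxq hqy _
          exact (hno ⟨x, q, y, hxq, hqy⟩).elim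
        exact hleast {a} hDa ⟨a, rfl⟩ hu
      exact hone ⟨u, fun b => (hall b).symm⟩
    obtain ⟨x, p, y, hxp, hpy⟩ := hchain3
    have npp : ¬ p < p := lt_irrefl p
    have hpD : DClosed ({p} : Set P) := mid_dclosed hP hxp hpy
    have hpU : p ∈ U := by
      obtain ⟨u, hu⟩ := hUne
      have h1 := hleast {p} hpD ⟨p, rfl⟩ hu
      rw [Set.mem_singleton_iff] at h1
      exact h1 ▸ hu
    have hcomp : ∀ c : P, c < p ∨ c = p ∨ p < c := by
      intro c
      by_cases hc : c = p
      · exact Or.inr (Or.inl hc)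
      by_cases h1 : ∃ q r : P, c < q ∧ q < r
      · obtain ⟨q, r, hcq, hqr⟩ := h1
        have hqD : DClosed ({q} : Set P) := mid_dclosed hP hcq hqr
        have hpq : p ∈ ({q} : Set P) := hleast {q} hqD ⟨q, rfl⟩ hpU
        rw [Set.mem_singleton_iff] at hpq
        exact Or.inl (hpq ▸ hcq)
      by_cases h2 : ∃ r q : P, r < q ∧ q < c
      · obtain ⟨r, q, hrq, hqc⟩ := h2
        have hqD : DClosed ({q} : Set P) := mid_dclosed hP hrq hqc
        have hpq : p ∈ ({q} : Set P) := hleast {q} hqD ⟨q, rfl⟩ hpU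
        rw [Set.mem_singleton_iff] at hpq
        exact Or.inr (Or.inr (hpq ▸ hqc))
      · have h3 := hleast {c} (sing_dclosed h1 h2) ⟨c, rfl⟩ hpU
        rw [Set.mem_singleton_iff] at h3
        exact absurd h3.symm hc
    have hIanti : ∀ c d : P, c < p → d < p → c ≤ d → c = d := by
      intro c d hc hd h
      rcases eq_or_lt_of_le h with rfl | h'
      · rfl
      · exact (no4 hP h' hd hpy).elim
    have hJanti : ∀ c d : P, p < c → p < d → c ≤ d → c = d := by
      intro c d hc hd h
      rcases eq_or_lt_of_le h with rfl | h'
      · rfl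
      · exact (no4 hP hxp hc h').elim
    refine ⟨{a : P // a < p}, {b : P // p < b}, ⟨⟨x, hxp⟩⟩, ⟨⟨y, hpy⟩⟩, ⟨?_⟩⟩
    set I := {a : P // a < p} with hI
    set J := {b : P // p < b} with hJ
    let f : P → PIJ I J := fun c =>
      if h : c < p then Sum.inl (⟨c, h⟩ : I)
      else if h' : p < c then Sum.inr (Sum.inr (⟨c, h'⟩ : J))
      else Sum.inr (Sum.inl ())
    let g : PIJ I J → P := Sum.elim (fun i => i.1) (Sum.elim (fun _ => p) (fun j => j.1))
    have hf_lt : ∀ (c : P) (h : c < p), f c = Sum.inl (⟨c, h⟩ : I) := fun c h => dif_pos h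
    have hf_eq : f p = Sum.inr (Sum.inl ()) := by
      show (if h : p < p then _ else if h' : p < p then _ else Sum.inr (Sum.inl ())) = _
      rw [dif_neg npp, dif_neg npp]
    have hf_gt : ∀ (c : P) (h : p < c), f c = Sum.inr (Sum.inr (⟨c, h⟩ : J)) := by
      intro c h
      have hcp : ¬ c < p := fun h' => absurd (h.trans h') npp
      show (if h0 : c < p then _ else if h' : p < c then Sum.inr (Sum.inr (⟨c, h'⟩ : J)) else _) = _
      rw [dif_neg hcp, dif_pos h]
    refine ⟨⟨f, g, ?_, ?_⟩, ?_⟩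
    · intro c
      rcases hcomp c with hc | hc | hc
      · rw [hf_lt c hc]; rfl
      · rw [hc, hf_eq]; rfl
      · rw [hf_gt c hc]; rfl
    · rintro (⟨i, hi⟩ | u | ⟨j, hj⟩)
      · exact hf_lt i hi
      · cases u; exact hf_eq
      · exact hf_gt j hj
    · intro c d
      show f c ≤ f d ↔ c ≤ d
      rcases hcomp c with hc | hc | hc <;> rcases hcomp d with hd | hd | hd
      · rw [hf_lt c hc, hf_lt d hd, pij_inl_le_inl]
        simp only [Subtype.mk.injEq]
        constructor
        · rintro rfl; exact le_rfl
        · exact hIanti c d hc hd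
      · rw [hf_lt c hc, hd, hf_eq]
        exact iff_of_true (pij_inl_le_mid _ _) hc.le
      · rw [hf_lt c hc, hf_gt d hd]
        exact iff_of_true (pij_inl_le_inr _ _) (hc.trans hd).le
      · rw [hc, hf_eq, hf_lt d hd]
        exact iff_of_false (pij_mid_not_le_inl _ _) (fun h => absurd (lt_of_le_of_lt h hd) npp)
      · rw [hc, hd, hf_eq]
        exact iff_of_true (pij_mid_le_mid _ _) le_rfl
      · rw [hc, hf_eq, hf_gt d hd]
        exact iff_of_true (pij_mid_le_inr _ _) hd.le
      · rw [hf_gt c hc, hf_lt d hd]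
        exact iff_of_false (pij_inr_not_le_inl _ _)
          (fun h => absurd ((hc.trans_le h).trans hd) npp)
      · rw [hf_gt c hc, hd, hf_eq]
        exact iff_of_false (pij_inr_not_le_mid _ _) (fun h => absurd (hc.trans_le h) npp)
      · rw [hf_gt c hc, hf_gt d hd, pij_inr_le_inr]
        simp only [Subtype.mk.injEq]
        constructor
        · rintro rfl; exact le_rfl
        · exact hJanti c d hc hd
  · rintro (⟨a, ha⟩ | ⟨I, J, ⟨i0⟩, ⟨j0⟩, ⟨e⟩⟩)
    · refine ⟨{a}, ?_, ⟨a, rfl⟩, ?_⟩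
      · intro x q z hxq _ _
        rw [ha x, ha q] at hxq
        exact absurd hxq (lt_irrefl a)
      · rintro V _ ⟨v, hv⟩ b hb
        rw [Set.mem_singleton_iff] at hb
        rw [hb, ← ha v]
        exact hv
    · set p0 : P := e.symm (Sum.inr (Sum.inl ())) with hp0
      refine ⟨{p0}, ?_, ⟨p0, rfl⟩, ?_⟩
      · intro a q b haq hqb _
        have h1 : e a < e q := e.lt_iff_lt.2 haq
        have h2 : e q < e b := e.lt_iff_lt.2 hqb
        rw [pij_lt_iff] at h1 h2
        have hb2 := pij_rank_le_two (e b)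
        have hr1 : PIJ.rank (e q) = 1 := by omega
        have hq1 := pij_rank_eq_one _ hr1
        rw [Set.mem_singleton_iff, hp0, ← hq1, e.symm_apply_apply]
      · rintro V hV ⟨v, hv⟩ b hb
        rw [Set.mem_singleton_iff] at hb
        subst hb
        rcases h : e v with i | u | j
        · have h1 : v < p0 := by
            erw [hp0, ← e.lt_iff_lt, e.apply_symm_apply, h, pij_lt_iff]
            simp [PIJ.rank]
          have h2 : p0 < e.symm (Sum.inr (Sum.inr j0)) := by
            erw [hp0, ← e.lt_iff_lt, e.apply_symm_apply, e.apply_symm_apply, pij_lt_iff]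
            simp [PIJ.rank]
          exact hV v p0 _ h1 h2 (Or.inl hv)
        · have hvp : v = p0 := by
            rw [hp0, ← h, e.symm_apply_apply]
          exact hvp ▸ hv
        · have h1 : p0 < v := by
            erw [hp0, ← e.lt_iff_lt, e.apply_symm_apply, h, pij_lt_iff]
            simp [PIJ.rank]
          have h2 : e.symm (Sum.inl i0) < p0 := by
            erw [hp0, ← e.lt_iff_lt, e.apply_symm_apply, e.apply_symm_apply, pij_lt_iff]
            simp [PIJ.rank]
          exact hV _ p0 v h2 h1 (Or.inr hv)
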